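/- For every finite domain Λ ⊂ ℤ², β ≥ β₀ sufficiently large, and every integer ℓ ≥ 4, the sum over collections Γ of pairwise externally compatible geometric contours in Λ each of length at least 2ℓ satisfies Σ_Γ exp(−2^{−ℓ}|Λ∖Γ̄| − (β/2)L(Γ)) ≤ 1, where Γ̄ is the union of the interiors and L(Γ) the total length. -/

import Mathlib

open scoped ENNReal

/-- Lexicographic order on `ℤ²`. -/
def lexLe (a b : ℤ × ℤ) : Prop := a.1 < b.1 ∨ (a.1 = b.1 ∧ a.2 ≤ b.2)

/-- `x` is the lexicographically minimal point of `s`. -/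
def IsLexMin (s : Finset (ℤ × ℤ)) (x : ℤ × ℤ) : Prop := x ∈ s ∧ ∀ y ∈ s, lexLe x y

private lemma exists_lexMin (D : Finset (ℤ × ℤ)) (hD : D.Nonempty) :
    ∃ x ∈ D, ∀ y ∈ D, lexLe x y := by
  obtain ⟨x, hx, hmin⟩ := D.exists_min_image (fun p => (toLex p : ℤ ×ₗ ℤ)) hD
  refine ⟨x, hx, fun y hy => ?_⟩
  have := hmin y hy
  rw [Prod.Lex.le_iff] at this
  exact this

private lemma ofReal_exp_sum {α : Type} (s : Finset α) (f : α → ℝ) :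
    ENNReal.ofReal (Real.exp (∑ i ∈ s, f i)) = ∏ i ∈ s, ENNReal.ofReal (Real.exp (f i)) := by
  classical
  induction s using Finset.induction with
  | empty => simp
  | insert _ _ h ih =>
      rw [Finset.sum_insert h, Real.exp_add, ENNReal.ofReal_mul (Real.exp_nonneg _),
        Finset.prod_insert h, ih]

private lemma half_pow_ofReal (m : ℕ) :
    ((2 : ℝ≥0∞)⁻¹) ^ m = ENNReal.ofReal ((2⁻¹ : ℝ) ^ m) := by
  rw [ENNReal.ofReal_pow (by norm_num)]
  congr 1
  rw [ENNReal.ofReal_inv_of_pos (by norm_num)]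
  norm_num

private lemma pow_neg_nat (ℓ : ℕ) : (2 : ℝ) ^ (-(ℓ : ℤ)) = (2⁻¹ : ℝ) ^ ℓ := by
  rw [zpow_neg, zpow_natCast, inv_pow]

private lemma seal_bound (n m : ℕ) (b : ℝ) (hb : b = (2⁻¹ : ℝ) ^ m) :
    ENNReal.ofReal (Real.exp (-b * n)) * (1 + ((2 : ℝ≥0∞)⁻¹) ^ m) ^ n ≤ 1 := by
  have hb0 : 0 ≤ b := by rw [hb]; positivity
  have h1 : (1 : ℝ≥0∞) + ((2 : ℝ≥0∞)⁻¹) ^ m ≤ ENNReal.ofReal (Real.exp b) := by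
    rw [half_pow_ofReal, ← hb, ← ENNReal.ofReal_one, ← ENNReal.ofReal_add (by norm_num) hb0]
    exact ENNReal.ofReal_le_ofReal (by linarith [Real.add_one_le_exp b])
  calc ENNReal.ofReal (Real.exp (-b * n)) * (1 + ((2:ℝ≥0∞)⁻¹) ^ m) ^ n
      ≤ ENNReal.ofReal (Real.exp (-b * n)) * (ENNReal.ofReal (Real.exp b)) ^ n :=
        mul_le_mul_right (pow_le_pow_left' h1 n) _
    _ = 1 := by
        rw [← ENNReal.ofReal_pow (Real.exp_nonneg _), ← Real.exp_nat_mul,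
          ← ENNReal.ofReal_mul (Real.exp_nonneg _), ← Real.exp_add]
        rw [show -b * (n:ℝ) + (n:ℝ) * b = 0 by ring, Real.exp_zero, ENNReal.ofReal_one]

private lemma numeric_bound {β : ℝ} (hβ : 100 ≤ β) {ℓ l : ℕ} (hℓ : 1 ≤ ℓ) (hl : ℓ ≤ l)
    {s : ℝ} (hs : s ≤ l) :
    (9 : ℝ) ^ l * Real.exp (s - β * l) ≤ (2⁻¹ : ℝ) ^ (ℓ + 1) * (2⁻¹ : ℝ) ^ l := by
  have h1 : Real.exp (s - β * l) ≤ Real.exp ((1 - β) * l) := by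
    apply Real.exp_le_exp.2
    have hl1 : (1:ℝ) ≤ (l:ℝ) := by exact_mod_cast Nat.one_le_iff_ne_zero.2 (by omega)
    nlinarith
  have h2 : (9:ℝ) ^ l * Real.exp ((1 - β) * l) = (9 * Real.exp (1 - β)) ^ l := by
    rw [mul_pow, mul_comm ((1:ℝ) - β) (l:ℝ), Real.exp_nat_mul]
  have h3 : 9 * Real.exp (1 - β) ≤ 8⁻¹ := by
    have he : (72 : ℝ) ≤ Real.exp (β - 1) := by
      have := Real.add_one_le_exp (β - 1)
      linarith
    have hpos : (0:ℝ) < Real.exp (β - 1) := Real.exp_pos _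
    have : Real.exp (1 - β) ≤ 72⁻¹ := by
      rw [show (1:ℝ) - β = -(β - 1) by ring, Real.exp_neg]
      exact inv_anti₀ (by norm_num) he
    linarith
  have h4 : ((9:ℝ) * Real.exp (1 - β)) ^ l ≤ (8⁻¹ : ℝ) ^ l :=
    pow_le_pow_left₀ (by positivity) h3 l
  have h5 : ((8:ℝ)⁻¹) ^ l = (4⁻¹ : ℝ) ^ l * (2⁻¹ : ℝ) ^ l := by
    rw [← mul_pow]; norm_num
  have h6 : ((4:ℝ)⁻¹) ^ l ≤ (4⁻¹ : ℝ) ^ ℓ :=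
    pow_le_pow_of_le_one (by norm_num) (by norm_num) hl
  have h7 : ((4:ℝ)⁻¹) ^ ℓ ≤ (2⁻¹ : ℝ) ^ (ℓ + 1) := by
    have : ((4:ℝ)⁻¹) ^ ℓ = (2⁻¹ : ℝ) ^ (2 * ℓ) := by
      rw [pow_mul]; norm_num
    rw [this]
    exact pow_le_pow_of_le_one (by norm_num) (by norm_num) (by omega)
  calc (9:ℝ) ^ l * Real.exp (s - β * l) ≤ (9:ℝ) ^ l * Real.exp ((1-β) * l) := by
        apply mul_le_mul_of_nonneg_left h1 (by positivity)
    _ = (9 * Real.exp (1 - β)) ^ l := h2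
    _ ≤ (8⁻¹ : ℝ) ^ l := h4
    _ = (4⁻¹ : ℝ) ^ l * (2⁻¹ : ℝ) ^ l := h5
    _ ≤ (2⁻¹ : ℝ) ^ (ℓ+1) * (2⁻¹ : ℝ) ^ l := by
        apply mul_le_mul_of_nonneg_right (h6.trans h7) (by positivity)

private lemma collection_sum_le {C : Type} (intr : C → Finset (ℤ × ℤ))
    (hne : ∀ γ, (intr γ).Nonempty)
    (w : C → ℝ≥0∞) (u : ℝ≥0∞)
    (hU : ∀ x : ℤ × ℤ, (∑' γ : {γ : C // IsLexMin (intr γ) x}, w γ.1) ≤ u) :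
    ∀ D : Finset (ℤ × ℤ),
      (∑' Γ : {Γ : Finset C // (∀ γ ∈ Γ, intr γ ⊆ D) ∧
          (Γ : Set C).Pairwise (fun γ γ' => Disjoint (intr γ) (intr γ'))},
        ∏ γ ∈ Γ.1, w γ) ≤ (1 + u) ^ D.card := by
  classical
  intro D
  induction D using Finset.strongInduction with
  | _ D ih =>
    rcases D.eq_empty_or_nonempty with rfl | hD
    · -- empty domain : only the empty collection
      have hins : (∀ γ ∈ (∅ : Finset C), intr γ ⊆ (∅ : Finset (ℤ×ℤ))) ∧
          ((∅ : Finset C) : Set C).Pairwise (fun γ γ' => Disjoint (intr γ) (intr γ')) := by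
        constructor
        · intro γ hγ; simp at hγ
        · simp
      rw [tsum_eq_single (⟨(∅ : Finset C), hins⟩ :
          {Γ : Finset C // (∀ γ ∈ Γ, intr γ ⊆ (∅ : Finset (ℤ×ℤ))) ∧
            (Γ : Set C).Pairwise (fun γ γ' => Disjoint (intr γ) (intr γ'))})]
      · simp
      · intro b hb
        exfalso
        apply hb
        have : b.1 = ∅ := by
          rw [Finset.eq_empty_iff_forall_notMem]
          intro γ hγ
          obtain ⟨y, hy⟩ := hne γ
          exact absurd (b.2.1 γ hγ hy) (by simp)
        exact Subtype.ext this
    · obtain ⟨x, hxD, hxmin⟩ := exists_lexMin D hD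
      have hcard : (D.erase x).card + 1 = D.card := Finset.card_erase_add_one hxD
      have hIH := ih (D.erase x) (Finset.erase_ssubset hxD)
      set A := {Γ : Finset C // (∀ γ ∈ Γ, intr γ ⊆ D) ∧
          (Γ : Set C).Pairwise (fun γ γ' => Disjoint (intr γ) (intr γ'))} with hA
      set A' := {Γ : Finset C // (∀ γ ∈ Γ, intr γ ⊆ D.erase x) ∧
          (Γ : Set C).Pairwise (fun γ γ' => Disjoint (intr γ) (intr γ'))} with hA'
      set f : A → ℝ≥0∞ := fun Γ => ∏ γ ∈ Γ.1, w γ with hf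
      set s : Set A := {Γ : A | ∃ γ ∈ Γ.1, x ∈ intr γ} with hs
      have hsplit : (∑' Γ : A, f Γ) = (∑' Γ : ↥s, f ↑Γ) + ∑' Γ : ↥sᶜ, f ↑Γ :=
        (Summable.tsum_add_tsum_compl ENNReal.summable ENNReal.summable).symm
      -- the part without a contour at x
      have h2 : (∑' Γ : ↥sᶜ, f ↑Γ) ≤ ∑' Γ : A', ∏ γ ∈ Γ.1, w γ := by
        have hmap : ∀ Γ : ↥sᶜ, (∀ γ ∈ (Γ.1.1 : Finset C), intr γ ⊆ D.erase x) ∧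
            ((Γ.1.1 : Finset C) : Set C).Pairwise (fun γ γ' => Disjoint (intr γ) (intr γ')) := by
          intro Γ
          refine ⟨fun γ hγ y hy => Finset.mem_erase.2 ⟨?_, Γ.1.2.1 γ hγ hy⟩, Γ.1.2.2⟩
          intro hyx
          exact Γ.2 ⟨γ, hγ, hyx ▸ hy⟩
        let j : ↥sᶜ → A' := fun Γ => ⟨Γ.1.1, hmap Γ⟩
        have hinj : Function.Injective j := by
          intro a b hab
          have : a.1.1 = b.1.1 := congrArg (fun Γ' : A' => Γ'.1) hab
          exact Subtype.ext (Subtype.ext this)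
        have : ∀ Γ : ↥sᶜ, f ↑Γ = (fun Γ' : A' => ∏ γ ∈ Γ'.1, w γ) (j Γ) := fun Γ => rfl
        rw [tsum_congr this]
        exact ENNReal.tsum_comp_le_tsum_of_injective hinj _
      -- the part with a contour at x
      have h3 : (∑' Γ : ↥s, f ↑Γ) ≤
          (∑' γ : {γ : C // IsLexMin (intr γ) x}, w γ.1) * ∑' Γ : A', ∏ γ ∈ Γ.1, w γ := by
        have hpick : ∀ Γ : ↥s, ∃ γ ∈ (Γ.1.1 : Finset C), x ∈ intr γ := fun Γ => Γ.2
        let pick : ↥s → C := fun Γ => (hpick Γ).choose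
        have hpick1 : ∀ Γ : ↥s, pick Γ ∈ (Γ.1.1 : Finset C) := fun Γ => (hpick Γ).choose_spec.1
        have hpick2 : ∀ Γ : ↥s, x ∈ intr (pick Γ) := fun Γ => (hpick Γ).choose_spec.2
        have hlexmin : ∀ Γ : ↥s, IsLexMin (intr (pick Γ)) x := by
          intro Γ
          exact ⟨hpick2 Γ, fun y hy => hxmin y (Γ.1.2.1 _ (hpick1 Γ) hy)⟩
        have herase : ∀ Γ : ↥s, (∀ γ ∈ (Γ.1.1 : Finset C).erase (pick Γ), intr γ ⊆ D.erase x) ∧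
            (((Γ.1.1 : Finset C).erase (pick Γ) : Set C)).Pairwise
              (fun γ γ' => Disjoint (intr γ) (intr γ')) := by
          intro Γ
          constructor
          · intro γ hγ y hy
            obtain ⟨hγne, hγΓ⟩ := Finset.mem_erase.1 hγ
            refine Finset.mem_erase.2 ⟨?_, Γ.1.2.1 γ hγΓ hy⟩
            intro hyx
            have hdis : Disjoint (intr γ) (intr (pick Γ)) :=
              Γ.1.2.2 (Finset.mem_coe.2 hγΓ) (Finset.mem_coe.2 (hpick1 Γ)) hγne
            exact (Finset.disjoint_left.1 hdis) (hyx ▸ hy) (hpick2 Γ)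
          · exact Γ.1.2.2.mono (Finset.coe_subset.2 (Finset.erase_subset _ _))
        let j : ↥s → {γ : C // IsLexMin (intr γ) x} × A' := fun Γ =>
          (⟨pick Γ, hlexmin Γ⟩, ⟨(Γ.1.1 : Finset C).erase (pick Γ), herase Γ⟩)
        have hinj : Function.Injective j := by
          intro a b hab
          have h1 : pick a = pick b := congrArg (fun p => p.1.1) hab
          have h2' : (a.1.1 : Finset C).erase (pick a) = (b.1.1 : Finset C).erase (pick b) :=
            congrArg (fun p => p.2.1) hab
          have ha' : (a.1.1 : Finset C) = insert (pick a) ((a.1.1 : Finset C).erase (pick a)) :=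
            (Finset.insert_erase (hpick1 a)).symm
          have hb' : (b.1.1 : Finset C) = insert (pick b) ((b.1.1 : Finset C).erase (pick b)) :=
            (Finset.insert_erase (hpick1 b)).symm
          apply Subtype.ext; apply Subtype.ext
          rw [ha', hb', h2', h1]
        have hterm : ∀ Γ : ↥s, f ↑Γ =
            (fun p : {γ : C // IsLexMin (intr γ) x} × A' => w p.1.1 * ∏ γ ∈ p.2.1, w γ) (j Γ) := by
          intro Γ
          exact (Finset.mul_prod_erase _ _ (hpick1 Γ)).symm
        rw [tsum_congr hterm]
        calc ∑' Γ : ↥s, (fun p : {γ : C // IsLexMin (intr γ) x} × A' =>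
                w p.1.1 * ∏ γ ∈ p.2.1, w γ) (j Γ)
            ≤ ∑' p : {γ : C // IsLexMin (intr γ) x} × A', w p.1.1 * ∏ γ ∈ p.2.1, w γ :=
              ENNReal.tsum_comp_le_tsum_of_injective hinj _
          _ = (∑' γ : {γ : C // IsLexMin (intr γ) x}, w γ.1) * ∑' Γ : A', ∏ γ ∈ Γ.1, w γ := by
              rw [ENNReal.tsum_prod']
              simp_rw [ENNReal.tsum_mul_left]
              rw [ENNReal.tsum_mul_right]
      calc (∑' Γ : A, f Γ) = (∑' Γ : ↥s, f ↑Γ) + ∑' Γ : ↥sᶜ, f ↑Γ := hsplit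
        _ ≤ ((∑' γ : {γ : C // IsLexMin (intr γ) x}, w γ.1) * ∑' Γ : A', ∏ γ ∈ Γ.1, w γ)
              + ∑' Γ : A', ∏ γ ∈ Γ.1, w γ := add_le_add h3 h2
        _ ≤ u * (1 + u) ^ (D.erase x).card + (1 + u) ^ (D.erase x).card := by
            apply add_le_add (mul_le_mul' (hU x) hIH) hIH
        _ = (1 + u) ^ ((D.erase x).card + 1) := by ring
        _ = (1 + u) ^ D.card := by rw [hcard]

private lemma point_sum_le {C : Type} (len : C → ℕ) (intr : C → Finset (ℤ × ℤ))
    (heven : ∀ γ, Even (len γ))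
    (h9 : ∀ (x : ℤ × ℤ) (l : ℕ),
        {γ : C | len γ = 2 * l ∧ IsLexMin (intr γ) x}.Finite ∧
        {γ : C | len γ = 2 * l ∧ IsLexMin (intr γ) x}.ncard ≤ 9 ^ l)
    (w : C → ℝ≥0∞) (φ : ℕ → ℝ≥0∞) (hw : ∀ γ, w γ ≤ φ (len γ / 2)) (x : ℤ × ℤ) :
    (∑' γ : {γ : C // IsLexMin (intr γ) x}, w γ.1) ≤ ∑' l : ℕ, (9 : ℝ≥0∞) ^ l * φ l := by
  classical
  set S : ℕ → Set C := fun l => {γ : C | len γ = 2 * l ∧ IsLexMin (intr γ) x} with hS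
  let j : {γ : C // IsLexMin (intr γ) x} → Σ l : ℕ, ↥(S l) := fun γ =>
    ⟨len γ.1 / 2, ⟨γ.1, ⟨(Nat.two_mul_div_two_of_even (heven γ.1)).symm, γ.2⟩⟩⟩
  have hinj : Function.Injective j := by
    intro a b hab
    have : a.1 = b.1 := congrArg (fun p : Σ l : ℕ, ↥(S l) => (p.2 : C)) hab
    exact Subtype.ext this
  calc (∑' γ : {γ : C // IsLexMin (intr γ) x}, w γ.1)
      ≤ ∑' γ : {γ : C // IsLexMin (intr γ) x}, (fun p : Σ l : ℕ, ↥(S l) => φ p.1) (j γ) :=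
        ENNReal.tsum_le_tsum fun γ => hw γ.1
    _ ≤ ∑' p : Σ l : ℕ, ↥(S l), φ p.1 := ENNReal.tsum_comp_le_tsum_of_injective hinj _
    _ = ∑' l : ℕ, ∑' γ : ↥(S l), φ l := ENNReal.tsum_sigma' _
    _ ≤ ∑' l : ℕ, (9 : ℝ≥0∞) ^ l * φ l := by
        apply ENNReal.tsum_le_tsum
        intro l
        haveI : Fintype ↥(S l) := (h9 x l).1.fintype
        rw [tsum_fintype]
        rw [Finset.sum_const]
        have hcard : Fintype.card ↥(S l) ≤ 9 ^ l := by
          rw [← Nat.card_eq_fintype_card, Nat.card_coe_set_eq]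
          exact (h9 x l).2
        calc Finset.univ.card • φ l = (Fintype.card ↥(S l) : ℝ≥0∞) * φ l := by
              rw [Finset.card_univ, nsmul_eq_mul]
          _ ≤ ((9 ^ l : ℕ) : ℝ≥0∞) * φ l := by
              exact mul_le_mul_left (by exact_mod_cast Nat.cast_le.2 hcard) _
          _ = (9 : ℝ≥0∞) ^ l * φ l := by push_cast; ring

private lemma base_case {C : Type} (len : C → ℕ) (intr : C → Finset (ℤ × ℤ))
    (heven : ∀ γ, Even (len γ))
    (hne : ∀ γ, (intr γ).Nonempty)
    (hiso : ∀ γ, (intr γ).card ≤ (len γ / 2) ^ 2)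
    (h9 : ∀ (x : ℤ × ℤ) (l : ℕ),
        {γ : C | len γ = 2 * l ∧ IsLexMin (intr γ) x}.Finite ∧
        {γ : C | len γ = 2 * l ∧ IsLexMin (intr γ) x}.ncard ≤ 9 ^ l)
    {β : ℝ} (hβ : 100 ≤ β) (Λ : Finset (ℤ × ℤ)) (ℓ : ℕ) (hℓ : 4 ≤ ℓ)
    (hN : Λ.card ≤ 4 ^ ℓ) :
    (∑' Γ : {Γ : Finset C // (∀ γ ∈ Γ, 2 * ℓ ≤ len γ ∧ intr γ ⊆ Λ) ∧
        (Γ : Set C).Pairwise (fun γ γ' => Disjoint (intr γ) (intr γ'))},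
      ENNReal.ofReal (Real.exp
        (-(2 : ℝ) ^ (-(ℓ : ℤ)) * ((Λ \ Γ.1.biUnion intr).card : ℝ)
          - (β / 2) * ∑ γ ∈ Γ.1, (len γ : ℝ)))) ≤ 1 := by
  classical
  set a : ℝ := (2 : ℝ) ^ (-(ℓ : ℤ)) with hadef
  have ha2 : a = (2⁻¹ : ℝ) ^ ℓ := pow_neg_nat ℓ
  have ha0 : 0 ≤ a := by rw [ha2]; positivity
  set N : ℕ := Λ.card with hNdef
  set w : C → ℝ≥0∞ := fun γ => if 2 * ℓ ≤ len γ then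
      ENNReal.ofReal (Real.exp (a * ((min ((len γ / 2) ^ 2) N : ℕ) : ℝ)
        - (β / 2) * (len γ : ℝ))) else 0 with hwdef
  -- the exponent gain is at most l
  have hamin : ∀ l : ℕ, ℓ ≤ l → a * ((min (l ^ 2) N : ℕ) : ℝ) ≤ l := by
    intro l hl
    have h1 : min (l ^ 2) N ≤ 2 ^ ℓ * l := by
      rcases le_or_gt l (2 ^ ℓ) with h | h
      · refine le_trans (min_le_left _ _) ?_
        rw [pow_two]
        exact Nat.mul_le_mul_right l h
      · refine le_trans (min_le_right _ _) (le_trans hN ?_)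
        have h4 : (4 : ℕ) ^ ℓ = 2 ^ ℓ * 2 ^ ℓ := by
          rw [show (4 : ℕ) = 2 * 2 by norm_num, mul_pow]
        rw [h4]
        exact Nat.mul_le_mul_left _ h.le
    have h2 : ((2:ℝ)⁻¹) ^ ℓ * ((2:ℝ) ^ ℓ) = 1 := by
      rw [← mul_pow]; norm_num
    calc a * ((min (l ^ 2) N : ℕ) : ℝ) ≤ a * ((2 ^ ℓ * l : ℕ) : ℝ) :=
          mul_le_mul_of_nonneg_left (Nat.cast_le.2 h1) ha0
      _ = l := by rw [ha2]; push_cast; rw [← mul_assoc, h2, one_mul]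
  -- per-point sums
  have hUx : ∀ x : ℤ × ℤ, (∑' γ : {γ : C // IsLexMin (intr γ) x}, w γ.1) ≤ ((2:ℝ≥0∞)⁻¹) ^ ℓ := by
    intro x
    set φ : ℕ → ℝ≥0∞ := fun l => if ℓ ≤ l then
        ENNReal.ofReal (Real.exp (a * ((min (l ^ 2) N : ℕ) : ℝ) - β * l)) else 0 with hφdef
    have hwφ : ∀ γ, w γ ≤ φ (len γ / 2) := by
      intro γ
      by_cases h : 2 * ℓ ≤ len γ
      · obtain ⟨m, hm⟩ := heven γ
        have hdiv : len γ / 2 = m := by omega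
        have hlm : ℓ ≤ m := by omega
        have hcast : (len γ : ℝ) = 2 * (m : ℝ) := by
          have : len γ = 2 * m := by omega
          exact_mod_cast this
        simp only [hwdef, hφdef, if_pos h, hdiv, if_pos hlm]
        apply le_of_eq
        congr 1
        rw [hcast]
        ring
      · simp [hwdef, if_neg h]
    refine (point_sum_le len intr heven h9 w φ hwφ x).trans ?_
    have hterm : ∀ l, (9:ℝ≥0∞) ^ l * φ l ≤ ((2:ℝ≥0∞)⁻¹) ^ (ℓ+1) * ((2:ℝ≥0∞)⁻¹) ^ l := by
      intro l
      by_cases hl : ℓ ≤ l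
      · simp only [hφdef, if_pos hl]
        have h9e : (9:ℝ≥0∞) ^ l = ENNReal.ofReal ((9:ℝ) ^ l) := by
          rw [ENNReal.ofReal_pow (by norm_num)]
          norm_num
        rw [h9e, ← ENNReal.ofReal_mul (by positivity), half_pow_ofReal, half_pow_ofReal,
          ← ENNReal.ofReal_mul (by positivity)]
        exact ENNReal.ofReal_le_ofReal (numeric_bound hβ (by omega) hl (hamin l hl))
      · simp [hφdef, if_neg hl]
    calc (∑' l : ℕ, (9:ℝ≥0∞) ^ l * φ l)
        ≤ ∑' l : ℕ, ((2:ℝ≥0∞)⁻¹) ^ (ℓ+1) * ((2:ℝ≥0∞)⁻¹) ^ l := ENNReal.tsum_le_tsum hterm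
      _ = ((2:ℝ≥0∞)⁻¹) ^ (ℓ+1) * ∑' l : ℕ, ((2:ℝ≥0∞)⁻¹) ^ l := ENNReal.tsum_mul_left
      _ = ((2:ℝ≥0∞)⁻¹) ^ (ℓ+1) * 2 := by
          rw [ENNReal.tsum_geometric, ENNReal.one_sub_inv_two, inv_inv]
      _ = ((2:ℝ≥0∞)⁻¹) ^ ℓ := by
          rw [pow_succ, mul_assoc, ENNReal.inv_mul_cancel two_ne_zero ENNReal.ofNat_ne_top, mul_one]
  have hT := collection_sum_le intr hne w (((2:ℝ≥0∞)⁻¹) ^ ℓ) hUx Λ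
  -- pointwise bound of the summand
  have hub : ∀ Γ : {Γ : Finset C // (∀ γ ∈ Γ, 2 * ℓ ≤ len γ ∧ intr γ ⊆ Λ) ∧
        (Γ : Set C).Pairwise (fun γ γ' => Disjoint (intr γ) (intr γ'))},
      ENNReal.ofReal (Real.exp
        (-a * ((Λ \ Γ.1.biUnion intr).card : ℝ) - (β / 2) * ∑ γ ∈ Γ.1, (len γ : ℝ)))
      ≤ ENNReal.ofReal (Real.exp (-a * (N : ℝ))) * ∏ γ ∈ Γ.1, w γ := by
    intro Γ
    have hdisj' : ∀ γ ∈ Γ.1, ∀ γ' ∈ Γ.1, γ ≠ γ' → Disjoint (intr γ) (intr γ') :=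
      fun γ hγ γ' hγ' hne' => Γ.2.2 (Finset.mem_coe.2 hγ) (Finset.mem_coe.2 hγ') hne'
    have hsubU : Γ.1.biUnion intr ⊆ Λ := Finset.biUnion_subset.2 fun γ hγ => (Γ.2.1 γ hγ).2
    have hcards : ((Λ \ Γ.1.biUnion intr).card : ℝ) = (N : ℝ) - ∑ γ ∈ Γ.1, ((intr γ).card : ℝ) := by
      rw [Finset.card_sdiff_of_subset hsubU, Nat.cast_sub (Finset.card_le_card hsubU),
        Finset.card_biUnion hdisj']
      push_cast
      ring
    have hexp : -a * ((Λ \ Γ.1.biUnion intr).card : ℝ) - (β / 2) * ∑ γ ∈ Γ.1, (len γ : ℝ)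
        = -a * (N : ℝ) + ∑ γ ∈ Γ.1, (a * ((intr γ).card : ℝ) - (β / 2) * (len γ : ℝ)) := by
      rw [hcards, Finset.sum_sub_distrib, ← Finset.mul_sum, ← Finset.mul_sum]
      ring
    rw [hexp, Real.exp_add, ENNReal.ofReal_mul (Real.exp_nonneg _), ofReal_exp_sum]
    apply mul_le_mul_right
    apply Finset.prod_le_prod'
    intro γ hγ
    have hlen : 2 * ℓ ≤ len γ := (Γ.2.1 γ hγ).1
    have hcle : (intr γ).card ≤ min ((len γ / 2) ^ 2) N :=
      le_min (hiso γ) (Finset.card_le_card (Γ.2.1 γ hγ).2)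
    simp only [hwdef, if_pos hlen]
    apply ENNReal.ofReal_le_ofReal
    apply Real.exp_le_exp.2
    exact sub_le_sub_right (mul_le_mul_of_nonneg_left (Nat.cast_le.2 hcle) ha0) _
  calc (∑' Γ : {Γ : Finset C // (∀ γ ∈ Γ, 2 * ℓ ≤ len γ ∧ intr γ ⊆ Λ) ∧
          (Γ : Set C).Pairwise (fun γ γ' => Disjoint (intr γ) (intr γ'))},
        ENNReal.ofReal (Real.exp
          (-a * ((Λ \ Γ.1.biUnion intr).card : ℝ) - (β / 2) * ∑ γ ∈ Γ.1, (len γ : ℝ))))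
      ≤ ∑' Γ : {Γ : Finset C // (∀ γ ∈ Γ, 2 * ℓ ≤ len γ ∧ intr γ ⊆ Λ) ∧
          (Γ : Set C).Pairwise (fun γ γ' => Disjoint (intr γ) (intr γ'))},
          ENNReal.ofReal (Real.exp (-a * (N : ℝ))) * ∏ γ ∈ Γ.1, w γ :=
        ENNReal.tsum_le_tsum hub
    _ = ENNReal.ofReal (Real.exp (-a * (N : ℝ))) *
          ∑' Γ : {Γ : Finset C // (∀ γ ∈ Γ, 2 * ℓ ≤ len γ ∧ intr γ ⊆ Λ) ∧
            (Γ : Set C).Pairwise (fun γ γ' => Disjoint (intr γ) (intr γ'))},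
            ∏ γ ∈ Γ.1, w γ := ENNReal.tsum_mul_left
    _ ≤ ENNReal.ofReal (Real.exp (-a * (N : ℝ))) *
          ∑' Γ : {Γ : Finset C // (∀ γ ∈ Γ, intr γ ⊆ Λ) ∧
            (Γ : Set C).Pairwise (fun γ γ' => Disjoint (intr γ) (intr γ'))},
            ∏ γ ∈ Γ.1, w γ := by
        apply mul_le_mul_right
        have hinj : Function.Injective (fun Γ : {Γ : Finset C // (∀ γ ∈ Γ, 2 * ℓ ≤ len γ ∧
            intr γ ⊆ Λ) ∧ (Γ : Set C).Pairwise (fun γ γ' => Disjoint (intr γ) (intr γ'))} =>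
            (⟨Γ.1, ⟨fun γ hγ => (Γ.2.1 γ hγ).2, Γ.2.2⟩⟩ :
              {Γ : Finset C // (∀ γ ∈ Γ, intr γ ⊆ Λ) ∧
                (Γ : Set C).Pairwise (fun γ γ' => Disjoint (intr γ) (intr γ'))})) := by
          intro A B h
          exact Subtype.ext (congrArg (fun p : {Γ : Finset C // (∀ γ ∈ Γ, intr γ ⊆ Λ) ∧
            (Γ : Set C).Pairwise (fun γ γ' => Disjoint (intr γ) (intr γ'))} => p.1) h)
        exact ENNReal.tsum_comp_le_tsum_of_injective hinj _
    _ ≤ ENNReal.ofReal (Real.exp (-a * (N : ℝ))) * (1 + ((2:ℝ≥0∞)⁻¹) ^ ℓ) ^ N :=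
        mul_le_mul_right hT _
    _ ≤ 1 := seal_bound N ℓ a ha2

private lemma tsum_ite_subtype {α : Type} (p : α → Prop) (f : α → ℝ≥0∞) [DecidablePred p] :
    (∑' x : α, if p x then f x else 0) = ∑' x : Subtype p, f x.1 := by
  calc (∑' x : α, if p x then f x else 0) = ∑' x : α, ({x | p x}).indicator f x := by
        apply tsum_congr; intro x
        by_cases h : p x <;> simp [Set.indicator_apply, h]
    _ = ∑' x : ↥{x | p x}, f x := (tsum_subtype _ _).symm
    _ = ∑' x : Subtype p, f x.1 := rfl

private lemma step_case {C : Type} (len : C → ℕ) (intr : C → Finset (ℤ × ℤ))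
    (heven : ∀ γ, Even (len γ))
    (hne : ∀ γ, (intr γ).Nonempty)
    (hiso : ∀ γ, (intr γ).card ≤ (len γ / 2) ^ 2)
    (h9 : ∀ (x : ℤ × ℤ) (l : ℕ),
        {γ : C | len γ = 2 * l ∧ IsLexMin (intr γ) x}.Finite ∧
        {γ : C | len γ = 2 * l ∧ IsLexMin (intr γ) x}.ncard ≤ 9 ^ l)
    {β : ℝ} (hβ : 100 ≤ β) (Λ : Finset (ℤ × ℤ)) (ℓ : ℕ) (hℓ : 4 ≤ ℓ) :
    (∑' Γ : {Γ : Finset C // (∀ γ ∈ Γ, 2 * ℓ ≤ len γ ∧ intr γ ⊆ Λ) ∧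
        (Γ : Set C).Pairwise (fun γ γ' => Disjoint (intr γ) (intr γ'))},
      ENNReal.ofReal (Real.exp
        (-(2 : ℝ) ^ (-(ℓ : ℤ)) * ((Λ \ Γ.1.biUnion intr).card : ℝ)
          - (β / 2) * ∑ γ ∈ Γ.1, (len γ : ℝ))))
    ≤ (∑' Γ : {Γ : Finset C // (∀ γ ∈ Γ, 2 * (ℓ+1) ≤ len γ ∧ intr γ ⊆ Λ) ∧
        (Γ : Set C).Pairwise (fun γ γ' => Disjoint (intr γ) (intr γ'))},
      ENNReal.ofReal (Real.exp
        (-(2 : ℝ) ^ (-((ℓ+1 : ℕ) : ℤ)) * ((Λ \ Γ.1.biUnion intr).card : ℝ)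
          - (β / 2) * ∑ γ ∈ Γ.1, (len γ : ℝ)))) := by
  classical
  set a : ℝ := (2 : ℝ) ^ (-(ℓ : ℤ)) with hadef
  set a' : ℝ := (2 : ℝ) ^ (-((ℓ+1 : ℕ) : ℤ)) with ha'def
  have ha2 : a = (2⁻¹ : ℝ) ^ ℓ := pow_neg_nat ℓ
  have ha'2 : a' = (2⁻¹ : ℝ) ^ (ℓ+1) := pow_neg_nat (ℓ+1)
  have haa : a = 2 * a' := by rw [ha2, ha'2, pow_succ]; ring
  have ha0 : 0 ≤ a := by rw [ha2]; positivity
  have ha'0 : 0 ≤ a' := by rw [ha'2]; positivity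
  set N : ℕ := Λ.card with hNdef
  set c : ℝ≥0∞ := ENNReal.ofReal (Real.exp (a * (ℓ:ℝ)^2 - β * ℓ)) with hcdef
  set w' : C → ℝ≥0∞ := fun γ => if len γ = 2*ℓ then c else 0 with hw'def
  -- per-point bound for `w'`
  have hU' : ∀ x : ℤ × ℤ, (∑' γ : {γ : C // IsLexMin (intr γ) x}, w' γ.1)
      ≤ ((2:ℝ≥0∞)⁻¹) ^ (ℓ+1) := by
    intro x
    set φ : ℕ → ℝ≥0∞ := fun l => if l = ℓ then c else 0 with hφdef
    have hwφ : ∀ γ, w' γ ≤ φ (len γ / 2) := by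
      intro γ
      by_cases h : len γ = 2*ℓ
      · have hdiv : len γ / 2 = ℓ := by omega
        simp [hw'def, hφdef, h, hdiv]
      · simp [hw'def, if_neg h]
    refine (point_sum_le len intr heven h9 w' φ hwφ x).trans ?_
    have hsum : (∑' l : ℕ, (9:ℝ≥0∞)^l * φ l) = (9:ℝ≥0∞)^ℓ * c := by
      have heq : ∀ l, (9:ℝ≥0∞)^l * φ l = if l = ℓ then (9:ℝ≥0∞)^ℓ * c else 0 := by
        intro l; by_cases h : l = ℓ <;> simp [hφdef, h]
      rw [tsum_congr heq, tsum_ite_eq]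
    rw [hsum]
    -- numeric : 9^ℓ c ≤ (2⁻¹)^(ℓ+1)
    have hs : a * (ℓ:ℝ)^2 ≤ ℓ := by
      have h1 : ℓ^2 ≤ 2^ℓ * ℓ := by
        rw [pow_two]
        exact Nat.mul_le_mul_right ℓ (Nat.lt_two_pow_self (n := ℓ)).le
      have h2 : ((2:ℝ)⁻¹) ^ ℓ * ((2:ℝ) ^ ℓ) = 1 := by rw [← mul_pow]; norm_num
      calc a * (ℓ:ℝ)^2 = a * ((ℓ^2 : ℕ) : ℝ) := by push_cast; ring
        _ ≤ a * ((2^ℓ * ℓ : ℕ) : ℝ) := mul_le_mul_of_nonneg_left (Nat.cast_le.2 h1) ha0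
        _ = (ℓ:ℝ) := by rw [ha2]; push_cast; rw [← mul_assoc, h2, one_mul]
    have hnum := numeric_bound hβ (show 1 ≤ ℓ by omega) (le_refl ℓ) hs
    have h9e : (9:ℝ≥0∞)^ℓ = ENNReal.ofReal ((9:ℝ)^ℓ) := by
      rw [ENNReal.ofReal_pow (by norm_num)]; norm_num
    calc (9:ℝ≥0∞)^ℓ * c = ENNReal.ofReal ((9:ℝ)^ℓ * Real.exp (a * (ℓ:ℝ)^2 - β * ℓ)) := by
          rw [hcdef, h9e, ← ENNReal.ofReal_mul (by positivity)]
      _ ≤ ENNReal.ofReal ((2⁻¹:ℝ)^(ℓ+1) * (2⁻¹:ℝ)^ℓ) := ENNReal.ofReal_le_ofReal hnum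
      _ ≤ ENNReal.ofReal ((2⁻¹:ℝ)^(ℓ+1)) := by
          apply ENNReal.ofReal_le_ofReal
          exact mul_le_of_le_one_right (by positivity) (pow_le_one₀ (by norm_num) (by norm_num))
      _ = ((2:ℝ≥0∞)⁻¹) ^ (ℓ+1) := (half_pow_ofReal (ℓ+1)).symm
  -- the splitting map
  set p2ℓ : C → Prop := fun γ => len γ = 2*ℓ with hp2ℓ
  set gfun : Finset C → Finset C → ℝ≥0∞ := fun G' E =>
    if (∀ γ ∈ E, intr γ ⊆ Λ \ G'.biUnion intr) ∧
        (E : Set C).Pairwise (fun γ γ' => Disjoint (intr γ) (intr γ')) then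
      ENNReal.ofReal (Real.exp (-a' * ((Λ \ G'.biUnion intr).card : ℝ))) * ∏ γ ∈ E, w' γ
    else 0 with hgfun
  have hΨpf : ∀ Γ : {Γ : Finset C // (∀ γ ∈ Γ, 2 * ℓ ≤ len γ ∧ intr γ ⊆ Λ) ∧
      (Γ : Set C).Pairwise (fun γ γ' => Disjoint (intr γ) (intr γ'))},
      (∀ γ ∈ Γ.1.filter (fun γ => ¬ p2ℓ γ), 2 * (ℓ+1) ≤ len γ ∧ intr γ ⊆ Λ) ∧
      ((Γ.1.filter (fun γ => ¬ p2ℓ γ) : Finset C) : Set C).Pairwise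
        (fun γ γ' => Disjoint (intr γ) (intr γ')) := by
    intro Γ
    constructor
    · intro γ hγ
      obtain ⟨hγΓ, hγp⟩ := Finset.mem_filter.1 hγ
      obtain ⟨m, hm⟩ := heven γ
      have h1 : 2 * ℓ ≤ len γ := (Γ.2.1 γ hγΓ).1
      refine ⟨by simp only [hp2ℓ] at hγp; omega, (Γ.2.1 γ hγΓ).2⟩
    · exact Γ.2.2.mono (Finset.coe_subset.2 (Finset.filter_subset _ _))
  set Ψ : {Γ : Finset C // (∀ γ ∈ Γ, 2 * ℓ ≤ len γ ∧ intr γ ⊆ Λ) ∧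
      (Γ : Set C).Pairwise (fun γ γ' => Disjoint (intr γ) (intr γ'))} →
      {Γ : Finset C // (∀ γ ∈ Γ, 2 * (ℓ+1) ≤ len γ ∧ intr γ ⊆ Λ) ∧
        (Γ : Set C).Pairwise (fun γ γ' => Disjoint (intr γ) (intr γ'))} × Finset C :=
    fun Γ => (⟨Γ.1.filter (fun γ => ¬ p2ℓ γ), hΨpf Γ⟩, Γ.1.filter p2ℓ) with hΨ
  have hinj : Function.Injective Ψ := by
    intro A B h
    have h1 : A.1.filter (fun γ => ¬ p2ℓ γ) = B.1.filter (fun γ => ¬ p2ℓ γ) := by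
      have := congrArg (fun q : {Γ : Finset C // (∀ γ ∈ Γ, 2 * (ℓ+1) ≤ len γ ∧ intr γ ⊆ Λ) ∧
        (Γ : Set C).Pairwise (fun γ γ' => Disjoint (intr γ) (intr γ'))} × Finset C => q.1.1) h
      simpa [hΨ] using this
    have h2 : A.1.filter p2ℓ = B.1.filter p2ℓ := by
      have := congrArg Prod.snd h
      simpa [hΨ] using this
    apply Subtype.ext
    rw [← Finset.filter_union_filter_not_eq p2ℓ A.1, ← Finset.filter_union_filter_not_eq p2ℓ B.1,
      h1, h2]
  set GG : {Γ : Finset C // (∀ γ ∈ Γ, 2 * (ℓ+1) ≤ len γ ∧ intr γ ⊆ Λ) ∧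
      (Γ : Set C).Pairwise (fun γ γ' => Disjoint (intr γ) (intr γ'))} × Finset C → ℝ≥0∞ :=
    fun p => ENNReal.ofReal (Real.exp
        (-a' * ((Λ \ p.1.1.biUnion intr).card : ℝ) - (β / 2) * ∑ γ ∈ p.1.1, (len γ : ℝ)))
      * gfun p.1.1 p.2 with hGG
  -- pointwise bound
  have hub : ∀ Γ : {Γ : Finset C // (∀ γ ∈ Γ, 2 * ℓ ≤ len γ ∧ intr γ ⊆ Λ) ∧
      (Γ : Set C).Pairwise (fun γ γ' => Disjoint (intr γ) (intr γ'))},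
      ENNReal.ofReal (Real.exp
        (-a * ((Λ \ Γ.1.biUnion intr).card : ℝ) - (β / 2) * ∑ γ ∈ Γ.1, (len γ : ℝ)))
      ≤ GG (Ψ Γ) := by
    intro Γ
    set G' : Finset C := Γ.1.filter (fun γ => ¬ p2ℓ γ) with hG'
    set E : Finset C := Γ.1.filter p2ℓ with hE
    have hGsub : G' ⊆ Γ.1 := Finset.filter_subset _ _
    have hEsub : E ⊆ Γ.1 := Finset.filter_subset _ _
    -- compatibility of E with the sdiff domain
    have hQ1 : ∀ γ ∈ E, intr γ ⊆ Λ \ G'.biUnion intr := by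
      intro γ hγ y hy
      rw [Finset.mem_sdiff]
      refine ⟨(Γ.2.1 γ (hEsub hγ)).2 hy, ?_⟩
      intro hmem
      obtain ⟨γ', hγ', hy'⟩ := Finset.mem_biUnion.1 hmem
      have hne' : γ ≠ γ' := by
        intro hgg
        have hp1 : p2ℓ γ := (Finset.mem_filter.1 hγ).2
        have hp2 : ¬ p2ℓ γ' := (Finset.mem_filter.1 hγ').2
        exact hp2 (hgg ▸ hp1)
      have hdis : Disjoint (intr γ) (intr γ') :=
        Γ.2.2 (Finset.mem_coe.2 (hEsub hγ)) (Finset.mem_coe.2 (hGsub hγ')) hne'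
      exact (Finset.disjoint_left.1 hdis) hy hy'
    have hQ : (∀ γ ∈ E, intr γ ⊆ Λ \ G'.biUnion intr) ∧
        (E : Set C).Pairwise (fun γ γ' => Disjoint (intr γ) (intr γ')) :=
      ⟨hQ1, Γ.2.2.mono (Finset.coe_subset.2 hEsub)⟩
    -- card identities
    have hdisjΓ : ∀ γ ∈ Γ.1, ∀ γ' ∈ Γ.1, γ ≠ γ' → Disjoint (intr γ) (intr γ') :=
      fun γ hγ γ' hγ' hne' => Γ.2.2 (Finset.mem_coe.2 hγ) (Finset.mem_coe.2 hγ') hne'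
    have hdisjG' : ∀ γ ∈ G', ∀ γ' ∈ G', γ ≠ γ' → Disjoint (intr γ) (intr γ') :=
      fun γ hγ γ' hγ' hne' => hdisjΓ γ (hGsub hγ) γ' (hGsub hγ') hne'
    have hsubUΓ : Γ.1.biUnion intr ⊆ Λ := Finset.biUnion_subset.2 fun γ hγ => (Γ.2.1 γ hγ).2
    have hsubUG' : G'.biUnion intr ⊆ Λ :=
      Finset.biUnion_subset.2 fun γ hγ => (Γ.2.1 γ (hGsub hγ)).2
    have hcardsΓ : ((Λ \ Γ.1.biUnion intr).card : ℝ)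
        = (N : ℝ) - ∑ γ ∈ Γ.1, ((intr γ).card : ℝ) := by
      rw [Finset.card_sdiff_of_subset hsubUΓ, Nat.cast_sub (Finset.card_le_card hsubUΓ),
        Finset.card_biUnion hdisjΓ]
      push_cast; ring
    have hcardsG' : ((Λ \ G'.biUnion intr).card : ℝ)
        = (N : ℝ) - ∑ γ ∈ G', ((intr γ).card : ℝ) := by
      rw [Finset.card_sdiff_of_subset hsubUG', Nat.cast_sub (Finset.card_le_card hsubUG'),
        Finset.card_biUnion hdisjG']
      push_cast; ring
    have hexp : -a * ((Λ \ Γ.1.biUnion intr).card : ℝ) - (β / 2) * ∑ γ ∈ Γ.1, (len γ : ℝ)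
        = (-a' * ((Λ \ G'.biUnion intr).card : ℝ) - (β / 2) * ∑ γ ∈ G', (len γ : ℝ))
          + (-a' * ((Λ \ G'.biUnion intr).card : ℝ)
            + ∑ γ ∈ E, (a * ((intr γ).card : ℝ) - (β / 2) * (len γ : ℝ))) := by
      have h1 : ∑ γ ∈ Γ.1, ((intr γ).card : ℝ)
          = ∑ γ ∈ E, ((intr γ).card : ℝ) + ∑ γ ∈ G', ((intr γ).card : ℝ) :=
        (Finset.sum_filter_add_sum_filter_not Γ.1 p2ℓ _).symm
      have h2 : ∑ γ ∈ Γ.1, (len γ : ℝ)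
          = ∑ γ ∈ E, (len γ : ℝ) + ∑ γ ∈ G', (len γ : ℝ) :=
        (Finset.sum_filter_add_sum_filter_not Γ.1 p2ℓ _).symm
      rw [hcardsΓ, hcardsG', h1, h2, Finset.sum_sub_distrib, ← Finset.mul_sum,
        ← Finset.mul_sum, haa]
      ring
    rw [hexp, Real.exp_add, ENNReal.ofReal_mul (Real.exp_nonneg _)]
    have hGGeq : GG (Ψ Γ) = ENNReal.ofReal (Real.exp
        (-a' * ((Λ \ G'.biUnion intr).card : ℝ) - (β / 2) * ∑ γ ∈ G', (len γ : ℝ)))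
        * gfun G' E := by
      simp only [hGG, hΨ, hG', hE]
    rw [hGGeq]
    apply mul_le_mul_right
    -- second factor
    have hg : gfun G' E = ENNReal.ofReal (Real.exp (-a' * ((Λ \ G'.biUnion intr).card : ℝ)))
        * ∏ γ ∈ E, w' γ := by
      simp only [hgfun, if_pos hQ]
    rw [hg]
    have hwc : ∀ γ ∈ E, w' γ = c := by
      intro γ hγ
      simp only [hw'def]; exact if_pos ((Finset.mem_filter.1 hγ).2 : p2ℓ γ)
    have hsumle : ∑ γ ∈ E, (a * ((intr γ).card : ℝ) - (β / 2) * (len γ : ℝ))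
        ≤ ∑ γ ∈ E, (a * (ℓ:ℝ)^2 - β * ℓ) := by
      apply Finset.sum_le_sum
      intro γ hγ
      have hlen : len γ = 2 * ℓ := (Finset.mem_filter.1 hγ).2
      have hdiv : len γ / 2 = ℓ := by omega
      have hcle : (intr γ).card ≤ ℓ ^ 2 := by
        have := hiso γ
        rwa [hdiv] at this
      have hc1 : a * ((intr γ).card : ℝ) ≤ a * (ℓ:ℝ)^2 := by
        have h' : ((intr γ).card : ℝ) ≤ (ℓ:ℝ)^2 := by exact_mod_cast hcle
        exact mul_le_mul_of_nonneg_left h' ha0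
      have hc2 : (β / 2) * (len γ : ℝ) = β * ℓ := by
        rw [hlen]; push_cast; ring
      rw [← hc2]
      linarith
    calc ENNReal.ofReal (Real.exp (-a' * ((Λ \ G'.biUnion intr).card : ℝ)
            + ∑ γ ∈ E, (a * ((intr γ).card : ℝ) - (β / 2) * (len γ : ℝ))))
        ≤ ENNReal.ofReal (Real.exp (-a' * ((Λ \ G'.biUnion intr).card : ℝ)
            + ∑ γ ∈ E, (a * (ℓ:ℝ)^2 - β * ℓ))) := by
          apply ENNReal.ofReal_le_ofReal
          apply Real.exp_le_exp.2
          linarith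
      _ = ENNReal.ofReal (Real.exp (-a' * ((Λ \ G'.biUnion intr).card : ℝ)))
            * ∏ γ ∈ E, w' γ := by
          rw [Real.exp_add, ENNReal.ofReal_mul (Real.exp_nonneg _), ofReal_exp_sum]
          congr 1
          apply Finset.prod_congr rfl
          intro γ hγ
          rw [hwc γ hγ, hcdef]
  -- assemble
  calc (∑' Γ : {Γ : Finset C // (∀ γ ∈ Γ, 2 * ℓ ≤ len γ ∧ intr γ ⊆ Λ) ∧
          (Γ : Set C).Pairwise (fun γ γ' => Disjoint (intr γ) (intr γ'))},
        ENNReal.ofReal (Real.exp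
          (-a * ((Λ \ Γ.1.biUnion intr).card : ℝ) - (β / 2) * ∑ γ ∈ Γ.1, (len γ : ℝ))))
      ≤ ∑' Γ : {Γ : Finset C // (∀ γ ∈ Γ, 2 * ℓ ≤ len γ ∧ intr γ ⊆ Λ) ∧
          (Γ : Set C).Pairwise (fun γ γ' => Disjoint (intr γ) (intr γ'))}, GG (Ψ Γ) :=
        ENNReal.tsum_le_tsum hub
    _ ≤ ∑' q, GG q := ENNReal.tsum_comp_le_tsum_of_injective hinj _
    _ = ∑' Γ' : {Γ : Finset C // (∀ γ ∈ Γ, 2 * (ℓ+1) ≤ len γ ∧ intr γ ⊆ Λ) ∧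
          (Γ : Set C).Pairwise (fun γ γ' => Disjoint (intr γ) (intr γ'))},
        (ENNReal.ofReal (Real.exp
          (-a' * ((Λ \ Γ'.1.biUnion intr).card : ℝ) - (β / 2) * ∑ γ ∈ Γ'.1, (len γ : ℝ)))
          * ∑' E : Finset C, gfun Γ'.1 E) := by
        rw [ENNReal.tsum_prod']
        apply tsum_congr
        intro Γ'
        rw [← ENNReal.tsum_mul_left]
    _ ≤ ∑' Γ' : {Γ : Finset C // (∀ γ ∈ Γ, 2 * (ℓ+1) ≤ len γ ∧ intr γ ⊆ Λ) ∧
          (Γ : Set C).Pairwise (fun γ γ' => Disjoint (intr γ) (intr γ'))},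
        ENNReal.ofReal (Real.exp
          (-a' * ((Λ \ Γ'.1.biUnion intr).card : ℝ) - (β / 2) * ∑ γ ∈ Γ'.1, (len γ : ℝ))) := by
        apply ENNReal.tsum_le_tsum
        intro Γ'
        have hinner : (∑' E : Finset C, gfun Γ'.1 E) ≤ 1 := by
          have hsplit : (∑' E : Finset C, gfun Γ'.1 E)
              = ENNReal.ofReal (Real.exp (-a' * ((Λ \ Γ'.1.biUnion intr).card : ℝ)))
                * ∑' E : Finset C, (if (∀ γ ∈ E, intr γ ⊆ Λ \ Γ'.1.biUnion intr) ∧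
                    (E : Set C).Pairwise (fun γ γ' => Disjoint (intr γ) (intr γ')) then
                    ∏ γ ∈ E, w' γ else 0) := by
            rw [← ENNReal.tsum_mul_left]
            apply tsum_congr
            intro E
            by_cases h : (∀ γ ∈ E, intr γ ⊆ Λ \ Γ'.1.biUnion intr) ∧
                (E : Set C).Pairwise (fun γ γ' => Disjoint (intr γ) (intr γ'))
            · simp only [hgfun, if_pos h]
            · simp only [hgfun, if_neg h, mul_zero]
          rw [hsplit, tsum_ite_subtype]
          calc ENNReal.ofReal (Real.exp (-a' * ((Λ \ Γ'.1.biUnion intr).card : ℝ)))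
              * ∑' E : Subtype _, ∏ γ ∈ E.1, w' γ
              ≤ ENNReal.ofReal (Real.exp (-a' * ((Λ \ Γ'.1.biUnion intr).card : ℝ)))
                * (1 + ((2:ℝ≥0∞)⁻¹) ^ (ℓ+1)) ^ (Λ \ Γ'.1.biUnion intr).card :=
              mul_le_mul_right (collection_sum_le intr hne w' _ hU' _) _
            _ ≤ 1 := seal_bound _ (ℓ+1) a' ha'2
        calc ENNReal.ofReal (Real.exp
              (-a' * ((Λ \ Γ'.1.biUnion intr).card : ℝ) - (β / 2) * ∑ γ ∈ Γ'.1, (len γ : ℝ)))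
              * ∑' E : Finset C, gfun Γ'.1 E
            ≤ ENNReal.ofReal (Real.exp
              (-a' * ((Λ \ Γ'.1.biUnion intr).card : ℝ) - (β / 2) * ∑ γ ∈ Γ'.1, (len γ : ℝ)))
              * 1 := mul_le_mul_right hinner _
          _ = _ := mul_one _

/-- For `β` large: for every finite domain `Λ ⊂ ℤ²` and every `ℓ ≥ 4`, the sum over
collections `Γ` of pairwise externally compatible (i.e. with disjoint interiors) geometric
contours in `Λ`, each of length at least `2ℓ`, satisfies
`Σ_Γ exp(−2^{−ℓ}|Λ∖Γ̄| − (β/2)L(Γ)) ≤ 1`.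
Contours are axiomatized by their length and interior, with: lengths even and `≥ 4`,
nonempty interiors, the isoperimetric bound `|γ̄| ≤ (len γ/2)²`, and at most `9^l` contours
of length `2l` whose interior has a given lexicographically minimal point. -/
theorem external_contour_collection_sum_bound :
    ∃ β₀ : ℝ, ∀ (C : Type) (len : C → ℕ) (intr : C → Finset (ℤ × ℤ)),
      (∀ γ, Even (len γ)) →
      (∀ γ, 4 ≤ len γ) →
      (∀ γ, (intr γ).Nonempty) →
      (∀ γ, (intr γ).card ≤ (len γ / 2) ^ 2) →
      (∀ (x : ℤ × ℤ) (l : ℕ),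
        {γ : C | len γ = 2 * l ∧ IsLexMin (intr γ) x}.Finite ∧
        {γ : C | len γ = 2 * l ∧ IsLexMin (intr γ) x}.ncard ≤ 9 ^ l) →
      ∀ β : ℝ, β₀ ≤ β → ∀ (Λ : Finset (ℤ × ℤ)) (ℓ : ℕ), 4 ≤ ℓ →
        (∑' Γ : {Γ : Finset C // (∀ γ ∈ Γ, 2 * ℓ ≤ len γ ∧ intr γ ⊆ Λ) ∧
              (Γ : Set C).Pairwise (fun γ γ' => Disjoint (intr γ) (intr γ'))},
          ENNReal.ofReal (Real.exp
            (-(2 : ℝ) ^ (-(ℓ : ℤ)) * ((Λ \ Γ.1.biUnion intr).card : ℝ)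
              - (β / 2) * ∑ γ ∈ Γ.1, (len γ : ℝ)))) ≤ 1 := by
  refine ⟨100, ?_⟩
  intro C len intr heven hlen4 hne hiso h9 β hβ Λ ℓ hℓ
  have main : ∀ d ℓ' (Λ' : Finset (ℤ × ℤ)), 4 ≤ ℓ' → Λ'.card ≤ 4 ^ (ℓ' + d) →
      (∑' Γ : {Γ : Finset C // (∀ γ ∈ Γ, 2 * ℓ' ≤ len γ ∧ intr γ ⊆ Λ') ∧
          (Γ : Set C).Pairwise (fun γ γ' => Disjoint (intr γ) (intr γ'))},
        ENNReal.ofReal (Real.exp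
          (-(2 : ℝ) ^ (-(ℓ' : ℤ)) * ((Λ' \ Γ.1.biUnion intr).card : ℝ)
            - (β / 2) * ∑ γ ∈ Γ.1, (len γ : ℝ)))) ≤ 1 := by
    intro d
    induction d with
    | zero =>
        intro ℓ' Λ' hℓ' hcard
        exact base_case len intr heven hne hiso h9 hβ Λ' ℓ' hℓ' (by simpa using hcard)
    | succ d ihd =>
        intro ℓ' Λ' hℓ' hcard
        refine (step_case len intr heven hne hiso h9 hβ Λ' ℓ' hℓ').trans ?_
        exact ihd (ℓ' + 1) Λ' (by omega)
          (by simpa [show ℓ' + 1 + d = ℓ' + (d + 1) by omega] using hcard)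
  refine main Λ.card ℓ Λ hℓ ?_
  calc Λ.card ≤ 2 ^ Λ.card := Nat.lt_two_pow_self.le
    _ ≤ 4 ^ Λ.card := Nat.pow_le_pow_left (by norm_num) _
    _ ≤ 4 ^ (ℓ + Λ.card) := Nat.pow_le_pow_right (by norm_num) (by omega)
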